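/- Let |D| denote the maximal column height of D. Every box R_t ∩ C_k of T(∞) with t ≤ |D| is nonempty, every box R_t ∩ C_k of T(∞) with t > |D| + 1 is empty, and the entry r of any nonempty box R_t ∩ C_k of T(∞) is either the entry of b(S) for some right extremal column staircase S in D, or the entry of the box R_t ∩ C^t, where C^t is the rightmost column of D of height ≥ t and this box is right extremal in D relative to ℓ(D); when t = |D| + 1, only the first alternative can occur. -/

import Mathlib

open scoped Classical

/-- height of column `j` of the diagram (columns numbered from 1). -/
def hgt (c : List ℕ) (j : ℕ) : ℕ := c.getD (j - 1) 0

/-- number of boxes in the columns strictly to the left of column `j`. -/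
def off (c : List ℕ) (j : ℕ) : ℕ := (c.take (j - 1)).sum

/-- `(i, j)` (row `i`, column `j`) is a box of the diagram `D`. -/
def IsBox (c : List ℕ) (i j : ℕ) : Prop :=
  1 ≤ j ∧ j ≤ c.length ∧ 1 ≤ i ∧ i ≤ hgt c j

/-- the entry of the box `(i, j)` in the tableau `T`. -/
def Tentry (c : List ℕ) (i j : ℕ) : ℕ := off c j + i

/-- the column of the box of `D` carrying entry `m` in `T`. -/
noncomputable def colOf (c : List ℕ) (m : ℕ) : ℕ := sInf {j | m ≤ (c.take j).sum}

/-- the row of the box of `D` carrying entry `m` in `T`. -/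
noncomputable def rowOf (c : List ℕ) (m : ℕ) : ℕ := m - off c (colOf c m)

/-- the total order `≼` on entries: increasing down columns, then from right to left. -/
def ple (c : List ℕ) (a b : ℕ) : Prop :=
  colOf c b < colOf c a ∨ (colOf c a = colOf c b ∧ a ≤ b)

/-- the strict version of `≼`. -/
def plt (c : List ℕ) (a b : ℕ) : Prop :=
  colOf c b < colOf c a ∨ (colOf c a = colOf c b ∧ a < b)

/-- column `j` has a left neighbour in `D`. -/
def HasLeftNb (c : List ℕ) (j : ℕ) : Prop :=
  ∃ i, 1 ≤ i ∧ i < j ∧ hgt c i = hgt c j ∧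
    ∀ i', i < i' → i' < j → hgt c i' ≠ hgt c j

/-- the `j`-th column of the tableau `T`, rows to optional entries. -/
def Tcol (c : List ℕ) (j : ℕ) : ℕ → Option ℕ := fun i =>
  if 1 ≤ i ∧ i ≤ hgt c j then some (Tentry c i j) else none

/-- one step of the propagation rule building `T(∞)`: the entry (if any) in row `t`
of column `j - 1` of `T(∞)` (given by `prev`) is propagated into the partially
built column `j` (given by `cur`). -/
noncomputable def propStep (c : List ℕ) (j : ℕ) (prev : ℕ → Option ℕ)
    (cur : ℕ → Option ℕ) (t : ℕ) : ℕ → Option ℕ :=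
  match prev t with
  | none => cur
  | some l =>
    if hgt c j = t then
      if HasLeftNb c j ∧ cur (t + 1) = none then
        Function.update cur (t + 1) (some l)
      else cur
    else
      if cur t = none then Function.update cur t (some l) else cur

/-- the `j`-th column of the composition tableau `T(∞)`. -/
noncomputable def TinfCol (c : List ℕ) : ℕ → ℕ → Option ℕ
  | 0 => fun _ => none
  | 1 => Tcol c 1
  | j + 2 =>
      (List.range (c.sum + 2)).foldl
        (propStep c (j + 2) (TinfCol c (j + 1))) (Tcol c (j + 2))

/-- labels of lines: `1` or `∗`. -/
inductive Lab : Type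
  | one : Lab
  | star : Lab
deriving DecidableEq

/-- maximal height among the columns `1, …, j - 1`. -/
def maxHgt (c : List ℕ) (j : ℕ) : ℕ := (c.take (j - 1)).foldr max 0

/-- the maximal column height of the diagram `D`. -/
def maxH (c : List ℕ) : ℕ := c.foldr max 0

/-- `LineB c a i j lab` : the line family `ℓ(D)` contains a line labelled `lab`
whose left end-point is the box of `D` carrying entry `a` in `T` and whose right
end-point is the box `(i, j)` (row `i` of column `C_j`). -/
def LineB (c : List ℕ) (a i j : ℕ) (lab : Lab) : Prop :=
  2 ≤ j ∧ j ≤ c.length ∧ 1 ≤ i ∧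
    (match lab with
     | Lab.one =>
         (maxHgt c j < hgt c j ∧ i ≤ maxHgt c j + 1 ∧ TinfCol c (j - 1) i = some a)
       ∨ (hgt c j ≤ maxHgt c j ∧ i + 1 ≤ hgt c j ∧ TinfCol c (j - 1) i = some a)
       ∨ (hgt c j ≤ maxHgt c j ∧ i = hgt c j ∧
           ¬(∃ j', 1 ≤ j' ∧ j' < j ∧ hgt c j' = hgt c j) ∧
           TinfCol c (j - 1) i = some a)
       ∨ (hgt c j ≤ maxHgt c j ∧ i = hgt c j ∧
           (∃ j', 1 ≤ j' ∧ j' < j ∧ hgt c j' = hgt c j) ∧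
           TinfCol c (j - 1) (i + 1) = some a)
     | Lab.star =>
         hgt c j ≤ maxHgt c j ∧ i = hgt c j ∧
           (∃ j', 1 ≤ j' ∧ j' < j ∧ hgt c j' = hgt c j) ∧
           TinfCol c (j - 1) i = some a)

/-- `LineE c a b lab` : `ℓ(D)` contains a line labelled `lab` joining the box of `D`
carrying entry `a` in `T` (on the left) to the box carrying entry `b` (on the right). -/
def LineE (c : List ℕ) (a b : ℕ) (lab : Lab) : Prop :=
  ∃ i j, LineB c a i j lab ∧ b = Tentry c i j

/-- the box `(i, j)` of `D` is right extremal relative to `ℓ(D)`. -/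
def RExt (c : List ℕ) (i j : ℕ) : Prop :=
  IsBox c i j ∧ ∀ i' j', ¬ LineB c (Tentry c i j) i' j' Lab.one

/-- `c` is a composition of `n`. -/
def IsComposition (c : List ℕ) (n : ℕ) : Prop :=
  c.sum = n ∧ ∀ x ∈ c, 0 < x

/-- a column staircase `S^cc_u` (without the maximality requirement): `col j` is the
index of the column `C'_{i_j}` of height `j`, for `j ∈ [u, cc]`. -/
def IsStair (c : List ℕ) (u cc : ℕ) (col : ℕ → ℕ) : Prop :=
  1 ≤ u ∧ u ≤ cc ∧
  (∀ j, u ≤ j → j ≤ cc →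
     1 ≤ col j ∧ col j ≤ c.length ∧ hgt c (col j) = j ∧ HasLeftNb c (col j)) ∧
  (∀ j, u ≤ j → j < cc → col j < col (j + 1) ∧
     ∀ j', col j < j' → j' < col (j + 1) → hgt c j' < j)

/-- a column staircase `S^cc_u`: a maximal family as above. -/
def IsMaxStair (c : List ℕ) (u cc : ℕ) (col : ℕ → ℕ) : Prop :=
  IsStair c u cc col ∧
  ¬ ∃ u' cc' col', IsStair c u' cc' col' ∧ u' ≤ u ∧ cc ≤ cc' ∧ (u' < u ∨ cc < cc') ∧
      ∀ j, u ≤ j → j ≤ cc → col' j = col j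

/-- the column containing the box `b(S)`, where `cu` is the index of the lowest
(leftmost) column of the staircase `S` of height `u`: the rightmost column of
height `≥ u` strictly to the left of `cu`. -/
noncomputable def stairBoxCol (c : List ℕ) (u cu : ℕ) : ℕ :=
  sSup {j | j < cu ∧ u ≤ hgt c j}

/-- a right extremal column staircase of height `u` and depth `cc`. -/
def RExtStair (c : List ℕ) (u cc : ℕ) (col : ℕ → ℕ) : Prop :=
  IsMaxStair c u cc col ∧ ∀ j', col cc < j' → j' ≤ c.length → hgt c j' < cc

section Basics

variable (c : List ℕ)

lemma le_foldr_max {l : List ℕ} {a : ℕ} (h : a ∈ l) : a ≤ l.foldr max 0 := by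
  induction l with
  | nil => cases h
  | cons b l ih =>
    rcases List.mem_cons.1 h with rfl | h
    · exact le_max_left _ _
    · exact le_trans (ih h) (le_max_right _ _)

lemma foldr_max_le {l : List ℕ} {b : ℕ} (h : ∀ a ∈ l, a ≤ b) : l.foldr max 0 ≤ b := by
  induction l with
  | nil => exact Nat.zero_le _
  | cons a l ih =>
    exact max_le (h a List.mem_cons_self) (ih fun x hx => h x (List.mem_cons_of_mem _ hx))

lemma foldr_max_append_single (l : List ℕ) (a : ℕ) :
    (l ++ [a]).foldr max 0 = max (l.foldr max 0) a := by
  induction l with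
  | nil => simp
  | cons b l ih => simp [List.foldr_cons, ih, max_assoc, max_comm a 0]

lemma hgt_le_sum (j : ℕ) : hgt c j ≤ c.sum := by
  unfold hgt
  rcases lt_or_ge (j - 1) c.length with h | h
  · rw [List.getD_eq_getElem c 0 h]
    exact List.single_le_sum (fun x _ => Nat.zero_le x) _ (List.getElem_mem h)
  · rw [List.getD_eq_default c 0 h]
    exact Nat.zero_le _

lemma hgt_pos {n : ℕ} (hc : IsComposition c n) {j : ℕ} (h1 : 1 ≤ j) (h2 : j ≤ c.length) :
    1 ≤ hgt c j := by
  unfold hgt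
  have hlt : j - 1 < c.length := by omega
  rw [List.getD_eq_getElem c 0 hlt]
  exact hc.2 _ (List.getElem_mem hlt)

lemma le_length_of_hgt_pos {j : ℕ} (h : 1 ≤ hgt c j) : j ≤ c.length := by
  unfold hgt at h
  rcases lt_or_ge (j - 1) c.length with hl | hl
  · omega
  · rw [List.getD_eq_default c 0 hl] at h
    omega

lemma hgt_le_maxHgt {i j : ℕ} (h1 : 1 ≤ i) (h2 : i < j) : hgt c i ≤ maxHgt c j := by
  unfold hgt maxHgt
  rcases lt_or_ge (i - 1) c.length with hl | hl
  · rw [List.getD_eq_getElem c 0 hl]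
    apply le_foldr_max
    rw [List.mem_take_iff_getElem]
    exact ⟨i - 1, by simp; omega, rfl⟩
  · rw [List.getD_eq_default c 0 hl]
    exact Nat.zero_le _

lemma maxHgt_mono {j j' : ℕ} (h : j ≤ j') : maxHgt c j ≤ maxHgt c j' := by
  unfold maxHgt
  apply foldr_max_le
  intro a ha
  apply le_foldr_max
  have heq : c.take (j - 1) = (c.take (j' - 1)).take (j - 1) := by
    rw [List.take_take, min_eq_left (by omega)]
  rw [heq] at ha
  exact List.mem_of_mem_take ha

lemma maxHgt_succ {j : ℕ} (hj : 1 ≤ j) : maxHgt c (j + 1) = max (maxHgt c j) (hgt c j) := by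
  unfold maxHgt hgt
  have hstep : j + 1 - 1 = (j - 1) + 1 := by omega
  rcases lt_or_ge (j - 1) c.length with hl | hl
  · rw [hstep, List.take_succ, List.getElem?_eq_getElem hl, List.getD_eq_getElem c 0 hl,
      Option.toList_some, foldr_max_append_single]
  · have h1 : c.take ((j-1) + 1) = c := List.take_of_length_le (by omega)
    have h2 : c.take (j - 1) = c := List.take_of_length_le (by omega)
    rw [hstep, h1, h2, List.getD_eq_default c 0 hl]
    simp

lemma maxH_eq : maxH c = maxHgt c (c.length + 1) := by
  unfold maxH maxHgt
  rw [List.take_of_length_le (by omega)]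

lemma maxHgt_le_sum (j : ℕ) : maxHgt c j ≤ c.sum := by
  unfold maxHgt
  apply foldr_max_le
  intro a ha
  exact List.single_le_sum (fun x _ => Nat.zero_le x) _ (List.mem_of_mem_take ha)

lemma off_succ {j : ℕ} (hj : 1 ≤ j) : off c (j + 1) = off c j + hgt c j := by
  unfold off hgt
  have hstep : j + 1 - 1 = (j - 1) + 1 := by omega
  rcases lt_or_ge (j - 1) c.length with hl | hl
  · rw [hstep, List.take_succ, List.getElem?_eq_getElem hl, List.getD_eq_getElem c 0 hl,
      Option.toList_some, List.sum_append, List.sum_cons, List.sum_nil]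
    omega
  · have h1 : c.take ((j-1) + 1) = c := List.take_of_length_le (by omega)
    have h2 : c.take (j - 1) = c := List.take_of_length_le (by omega)
    rw [hstep, h1, h2, List.getD_eq_default c 0 hl]
    simp

lemma off_mono {j j' : ℕ} (h : j ≤ j') : off c j ≤ off c j' := by
  unfold off
  have heq : c.take (j' - 1) = (c.take (j' - 1)).take (j - 1) ++ ((c.take (j' - 1)).drop (j - 1)) :=
    (List.take_append_drop _ _).symm
  have heq2 : (c.take (j' - 1)).take (j - 1) = c.take (j - 1) := by
    rw [List.take_take, min_eq_left (by omega)]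
  calc (c.take (j - 1)).sum ≤ (c.take (j - 1)).sum + ((c.take (j' - 1)).drop (j - 1)).sum :=
        Nat.le_add_right _ _
    _ = (c.take (j' - 1)).sum := by rw [← heq2, ← List.sum_append, ← heq]

end Basics
section Basics2

variable (c : List ℕ)

lemma off_lt_Tentry {t p : ℕ} (ht : 1 ≤ t) : off c p < Tentry c t p := by
  unfold Tentry; omega

lemma Tentry_le_off_succ {t p : ℕ} (ht : t ≤ hgt c p) (hp : 1 ≤ p) :
    Tentry c t p ≤ off c (p + 1) := by
  rw [off_succ c hp]; unfold Tentry; omega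

lemma Tentry_inj {t p t1 p1 : ℕ} (ht : 1 ≤ t) (ht' : t ≤ hgt c p) (hp : 1 ≤ p)
    (h1 : 1 ≤ t1) (h1' : t1 ≤ hgt c p1) (hp1 : 1 ≤ p1)
    (heq : Tentry c t p = Tentry c t1 p1) : t = t1 ∧ p = p1 := by
  rcases lt_trichotomy p p1 with h | h | h
  · exfalso
    have := Tentry_le_off_succ c ht' hp
    have h2 := off_mono c (show p + 1 ≤ p1 by omega)
    have := off_lt_Tentry c (p := p1) h1
    omega
  · subst h; unfold Tentry at heq; omega
  · exfalso
    have := Tentry_le_off_succ c h1' hp1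
    have h2 := off_mono c (show p1 + 1 ≤ p by omega)
    have := off_lt_Tentry c (p := p) ht
    omega

lemma hasLeftNb_of_exists {x : ℕ} (h : ∃ y, 1 ≤ y ∧ y < x ∧ hgt c y = hgt c x) :
    HasLeftNb c x := by
  classical
  obtain ⟨y, hy1, hy2, hy3⟩ := h
  set P : ℕ → Prop := fun z => 1 ≤ z ∧ hgt c z = hgt c x with hP
  have hyP : P y := ⟨hy1, hy3⟩
  set y0 := Nat.findGreatest P (x - 1) with hy0
  have hspec : P y0 := Nat.findGreatest_spec (m := y) (by omega) hyP
  have hle : y0 ≤ x - 1 := Nat.findGreatest_le _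
  refine ⟨y0, hspec.1, by omega, hspec.2, ?_⟩
  intro i' hi1 hi2 hcon
  have h1 : 1 ≤ i' := by omega
  exact absurd ⟨h1, hcon⟩ (Nat.findGreatest_is_greatest hi1 (by omega))

lemma hasLeftNb_le_maxHgt {x : ℕ} (h : HasLeftNb c x) : hgt c x ≤ maxHgt c x := by
  obtain ⟨y, hy1, hy2, hy3, -⟩ := h
  rw [← hy3]
  exact hgt_le_maxHgt c hy1 hy2

end Basics2
/-- the target description of column `j` of `T(∞)`, given the previous column `prev`. -/
noncomputable def tgt (c : List ℕ) (j : ℕ) (prev : ℕ → Option ℕ) (i : ℕ) : Option ℕ :=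
  if 1 ≤ i ∧ i ≤ hgt c j then some (Tentry c i j)
  else if i = hgt c j + 1 ∧ HasLeftNb c j ∧ prev (hgt c j) ≠ none then prev (hgt c j)
  else prev i

section Fold

variable (c : List ℕ) (j : ℕ) (prev : ℕ → Option ℕ)

lemma Tcol_eq_none {i : ℕ} (h : ¬(1 ≤ i ∧ i ≤ hgt c j)) : Tcol c j i = none := by
  unfold Tcol; rw [if_neg h]

lemma Tcol_eq_some {i : ℕ} (h : 1 ≤ i ∧ i ≤ hgt c j) : Tcol c j i = some (Tentry c i j) := by
  unfold Tcol; rw [if_pos h]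

lemma propStep_apply_ne (cur : ℕ → Option ℕ) (t : ℕ) {i : ℕ} (h1 : i ≠ t) (h2 : i ≠ t + 1) :
    propStep c j prev cur t i = cur i := by
  unfold propStep
  cases prev t with
  | none => rfl
  | some l =>
    dsimp only
    split
    · split
      · rw [Function.update_of_ne h2]
      · rfl
    · split
      · rw [Function.update_of_ne h1]
      · rfl

lemma foldl_propStep (hprev0 : prev 0 = none) (t : ℕ) :
    (∀ i, i < t → (List.range t).foldl (propStep c j prev) (Tcol c j) i = tgt c j prev i) ∧
    (∀ i, t < i → (List.range t).foldl (propStep c j prev) (Tcol c j) i = Tcol c j i) ∧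
    ((List.range t).foldl (propStep c j prev) (Tcol c j) t =
      if t = hgt c j + 1 ∧ HasLeftNb c j ∧ prev (hgt c j) ≠ none then prev (hgt c j)
      else Tcol c j t) := by
  induction t with
  | zero =>
    refine ⟨fun i hi => absurd hi (by omega), fun i hi => rfl, ?_⟩
    rw [List.range_zero, List.foldl_nil, if_neg (by omega), Tcol_eq_none c j (by omega)]
  | succ t ih =>
    obtain ⟨ih1, ih2, ih3⟩ := ih
    set g := (List.range t).foldl (propStep c j prev) (Tcol c j) with hg
    have hstep : (List.range (t+1)).foldl (propStep c j prev) (Tcol c j) =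
        propStep c j prev g t := by
      rw [List.range_succ, List.foldl_append, List.foldl_cons, List.foldl_nil]
    rw [hstep]
    have htpos : prev t ≠ none → 1 ≤ t := by
      intro h; by_contra hc; push_neg at hc; interval_cases t; exact h hprev0
    refine ⟨?_, ?_, ?_⟩
    · -- positions < t+1
      intro i hi
      rcases Nat.lt_or_ge i t with hit | hit
      · rw [propStep_apply_ne c j prev g t (by omega) (by omega)]
        exact ih1 i hit
      · have hit : i = t := by omega
        subst hit
        -- value at position i = t
        unfold tgt
        cases hpt : prev i with
        | none =>
          have : propStep c j prev g i i = g i := by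
            unfold propStep; rw [hpt]
          rw [this, ih3]
          by_cases hb : i = hgt c j + 1 ∧ HasLeftNb c j ∧ prev (hgt c j) ≠ none
          · rw [if_pos hb, if_neg (by omega), if_pos hb]
          · rw [if_neg hb, if_neg hb]
            by_cases h1 : 1 ≤ i ∧ i ≤ hgt c j
            · rw [if_pos h1, Tcol_eq_some c j h1]
            · rw [if_neg h1, Tcol_eq_none c j h1]
        | some l =>
          have h1t : 1 ≤ i := htpos (by rw [hpt]; simp)
          by_cases hh : hgt c j = i
          · -- bump column: position i unchanged
            have : propStep c j prev g i i = g i := by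
              unfold propStep; rw [hpt]
              dsimp only
              rw [if_pos hh]
              split
              · rw [Function.update_of_ne (by omega)]
              · rfl
            rw [this, ih3, if_neg (by omega), if_pos ⟨h1t, by omega⟩,
              Tcol_eq_some c j ⟨h1t, by omega⟩]
          · -- non-bump column
            have hval : propStep c j prev g i = if g i = none then
                Function.update g i (some l) else g := by
              unfold propStep; rw [hpt]; dsimp only; rw [if_neg hh]
            by_cases hb : i = hgt c j + 1 ∧ HasLeftNb c j ∧ prev (hgt c j) ≠ none
            · have hgi : g i = prev (hgt c j) := by rw [ih3, if_pos hb]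
              have hne : g i ≠ none := by rw [hgi]; exact hb.2.2
              rw [hval, if_neg hne, if_neg (by omega), if_pos hb, hgi]
            · have hgi : g i = Tcol c j i := by rw [ih3, if_neg hb]
              by_cases h1 : 1 ≤ i ∧ i ≤ hgt c j
              · have hne : g i ≠ none := by rw [hgi, Tcol_eq_some c j h1]; simp
                rw [hval, if_neg hne, if_pos h1, hgi, Tcol_eq_some c j h1]
              · have hne : g i = none := by rw [hgi, Tcol_eq_none c j h1]
                rw [hval, if_pos hne, Function.update_self, if_neg h1, if_neg hb]
    · -- positions > t+1
      intro i hi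
      rw [propStep_apply_ne c j prev g t (by omega) (by omega)]
      exact ih2 i (by omega)
    · -- position t+1
      cases hpt : prev t with
      | none =>
        have heq : propStep c j prev g t (t+1) = g (t+1) := by
          unfold propStep; rw [hpt]
        rw [heq, ih2 (t+1) (by omega)]
        rw [if_neg ?_]
        rintro ⟨he, -, hne⟩
        have : hgt c j = t := by omega
        rw [this, hpt] at hne
        exact hne rfl
      | some l =>
        have h1t : 1 ≤ t := htpos (by rw [hpt]; simp)
        by_cases hh : hgt c j = t
        · by_cases hlnb : HasLeftNb c j
          · have hcur : g (t+1) = none := by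
              rw [ih2 (t+1) (by omega), Tcol_eq_none c j (by omega)]
            have heq : propStep c j prev g t (t+1) = some l := by
              unfold propStep; rw [hpt]; dsimp only
              rw [if_pos hh, if_pos ⟨hlnb, hcur⟩, Function.update_self]
            rw [heq, if_pos ⟨by omega, hlnb, by rw [hh, hpt]; simp⟩, hh, hpt]
          · have heq : propStep c j prev g t (t+1) = g (t+1) := by
              unfold propStep; rw [hpt]; dsimp only
              rw [if_pos hh, if_neg (by tauto)]
            rw [heq, ih2 (t+1) (by omega), if_neg (by tauto)]
        · have heq : propStep c j prev g t (t+1) = g (t+1) := by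
            unfold propStep; rw [hpt]; dsimp only
            rw [if_neg hh]
            split
            · rw [Function.update_of_ne (by omega)]
            · rfl
          rw [heq, ih2 (t+1) (by omega), if_neg (by omega)]

end Fold
section TinfRec

variable (c : List ℕ)

lemma tinf_eq_tgt_of_bound (j : ℕ)
    (hb : ∀ i, TinfCol c (j+1) i ≠ none → 1 ≤ i ∧ i ≤ c.sum + 1) :
    ∀ i, TinfCol c (j+2) i = tgt c (j+2) (TinfCol c (j+1)) i := by
  have hprev0 : TinfCol c (j+1) 0 = none := by
    by_contra h
    have := hb 0 h
    omega
  have hprev_none : ∀ i, c.sum + 1 < i → TinfCol c (j+1) i = none := by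
    intro i hi
    by_contra h
    have := hb i h
    omega
  have hdef : TinfCol c (j+2) =
      (List.range (c.sum + 2)).foldl (propStep c (j+2) (TinfCol c (j+1))) (Tcol c (j+2)) := by
    rw [TinfCol]
  obtain ⟨h1, h2, h3⟩ := foldl_propStep c (j+2) (TinfCol c (j+1)) hprev0 (c.sum + 2)
  intro i
  have hhle : hgt c (j+2) ≤ c.sum := hgt_le_sum c (j+2)
  rcases lt_trichotomy i (c.sum + 2) with hi | hi | hi
  · rw [hdef]; exact h1 i hi
  · subst hi
    rw [hdef, h3, if_neg (by omega), Tcol_eq_none c (j+2) (by omega)]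
    unfold tgt
    rw [if_neg (by omega), if_neg (by omega), hprev_none _ (by omega)]
  · rw [hdef, h2 i hi, Tcol_eq_none c (j+2) (by omega)]
    unfold tgt
    rw [if_neg (by omega), if_neg (by omega), hprev_none _ (by omega)]

lemma tinf_bound : ∀ j i, TinfCol c j i ≠ none → 1 ≤ i ∧ i ≤ c.sum + 1 := by
  intro j
  induction j using Nat.strong_induction_on with
  | _ j ih =>
    match j with
    | 0 => intro i h; exact absurd rfl h
    | 1 =>
      intro i h
      rw [TinfCol] at h
      unfold Tcol at h
      by_cases h1 : 1 ≤ i ∧ i ≤ hgt c 1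
      · have := hgt_le_sum c 1; omega
      · rw [if_neg h1] at h; exact absurd rfl h
    | (m+2) =>
      intro i h
      rw [tinf_eq_tgt_of_bound c m (ih (m+1) (by omega))] at h
      unfold tgt at h
      have hhle : hgt c (m+2) ≤ c.sum := hgt_le_sum c (m+2)
      by_cases h1 : 1 ≤ i ∧ i ≤ hgt c (m+2)
      · omega
      · rw [if_neg h1] at h
        by_cases h2 : i = hgt c (m+2) + 1 ∧ HasLeftNb c (m+2) ∧
            TinfCol c (m+1) (hgt c (m+2)) ≠ none
        · omega
        · rw [if_neg h2] at h
          exact ih (m+1) (by omega) i h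

lemma tinf_rec (j : ℕ) :
    ∀ i, TinfCol c (j+2) i = tgt c (j+2) (TinfCol c (j+1)) i :=
  tinf_eq_tgt_of_bound c j (tinf_bound c (j+1))

lemma tinf_zero_row (j : ℕ) : TinfCol c j 0 = none := by
  by_contra h
  have := tinf_bound c j 0 h
  omega

end TinfRec
section TinfBounds

variable (c : List ℕ)

lemma maxHgt_one : maxHgt c 1 = 0 := by
  unfold maxHgt
  simp

lemma tinf_tight_bound : ∀ j, 1 ≤ j → j ≤ c.length →
    ∀ i, TinfCol c j i ≠ none → i ≤ maxHgt c (j+1) + 1 := by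
  intro j
  induction j using Nat.strong_induction_on with
  | _ j ih =>
    match j with
    | 0 => omega
    | 1 =>
      intro _ _ i h
      rw [TinfCol] at h
      unfold Tcol at h
      by_cases h1 : 1 ≤ i ∧ i ≤ hgt c 1
      · have h2 : hgt c 1 ≤ maxHgt c 2 := hgt_le_maxHgt c le_rfl (by omega)
        have h3 : maxHgt c (1+1) = maxHgt c 2 := rfl
        omega
      · rw [if_neg h1] at h; exact absurd rfl h
    | (m+2) =>
      intro _ hlen i h
      rw [tinf_rec c m] at h
      unfold tgt at h
      have hm1 : hgt c (m+2) ≤ maxHgt c (m+3) := hgt_le_maxHgt c (by omega) (by omega)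
      have hm2 : maxHgt c (m+2) ≤ maxHgt c (m+3) := maxHgt_mono c (by omega)
      have he1 : maxHgt c (m+2+1) = maxHgt c (m+3) := rfl
      have he2 : maxHgt c (m+1+1) = maxHgt c (m+2) := rfl
      by_cases h1 : 1 ≤ i ∧ i ≤ hgt c (m+2)
      · omega
      · rw [if_neg h1] at h
        by_cases h2 : i = hgt c (m+2) + 1 ∧ HasLeftNb c (m+2) ∧
            TinfCol c (m+1) (hgt c (m+2)) ≠ none
        · omega
        · rw [if_neg h2] at h
          have := ih (m+1) (by omega) (by omega) (by omega) i h
          omega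

lemma tinf_nonempty {n : ℕ} (hc : IsComposition c n) : ∀ j, 1 ≤ j → j ≤ c.length →
    ∀ i, 1 ≤ i → i ≤ maxHgt c (j+1) → TinfCol c j i ≠ none := by
  intro j
  induction j using Nat.strong_induction_on with
  | _ j ih =>
    match j with
    | 0 => omega
    | 1 =>
      intro _ _ i h1 h2
      rw [maxHgt_succ c le_rfl, maxHgt_one c] at h2
      rw [TinfCol, Tcol_eq_some c 1 ⟨h1, by omega⟩]
      simp
    | (m+2) =>
      intro _ hlen i h1 h2
      rw [tinf_rec c m]
      unfold tgt
      rw [maxHgt_succ c (show 1 ≤ m + 2 by omega)] at h2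
      by_cases hb1 : 1 ≤ i ∧ i ≤ hgt c (m+2)
      · rw [if_pos hb1]; simp
      · rw [if_neg hb1]
        have hi : i ≤ maxHgt c (m+2) := by omega
        by_cases hb2 : i = hgt c (m+2) + 1 ∧ HasLeftNb c (m+2) ∧
            TinfCol c (m+1) (hgt c (m+2)) ≠ none
        · rw [if_pos hb2]; exact hb2.2.2
        · rw [if_neg hb2]
          exact ih (m+1) (by omega) (by omega) (by omega) i h1 hi

lemma tinf_lnb_prev {n : ℕ} (hc : IsComposition c n) {j : ℕ} (h2 : 2 ≤ j) (hl : j ≤ c.length)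
    (hlnb : HasLeftNb c j) : TinfCol c (j-1) (hgt c j) ≠ none := by
  have hh1 : 1 ≤ hgt c j := hgt_pos c hc (by omega) hl
  have hh2 : hgt c j ≤ maxHgt c j := hasLeftNb_le_maxHgt c hlnb
  have := tinf_nonempty c hc (j-1) (by omega) (by omega) (hgt c j) hh1
  have hje : j - 1 + 1 = j := by omega
  rw [hje] at this
  exact this hh2

end TinfBounds
/-- `Trav c p t j r` : the entry of box `(t, p)` of `T` is present in row `r`
of column `j` of `T(∞)`. -/
inductive Trav (c : List ℕ) : ℕ → ℕ → ℕ → ℕ → Prop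
  | base {p t : ℕ} : 1 ≤ p → p ≤ c.length → 1 ≤ t → t ≤ hgt c p → Trav c p t p t
  | same {p t j r : ℕ} : Trav c p t j r → j + 1 ≤ c.length → hgt c (j+1) < r →
      ¬(hgt c (j+1) = r - 1 ∧ HasLeftNb c (j+1)) → Trav c p t (j+1) r
  | bump {p t j r : ℕ} : Trav c p t j r → j + 1 ≤ c.length → hgt c (j+1) = r →
      HasLeftNb c (j+1) → Trav c p t (j+1) (r+1)

section TravBasic

variable {c : List ℕ}

lemma trav_facts {p t j r : ℕ} (h : Trav c p t j r) :
    1 ≤ p ∧ p ≤ j ∧ j ≤ c.length ∧ 1 ≤ t ∧ t ≤ r ∧ t ≤ hgt c p := by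
  induction h with
  | base h1 h2 h3 h4 => exact ⟨h1, le_rfl, h2, h3, le_rfl, h4⟩
  | same h hlen hh hnb ih => exact ⟨ih.1, by omega, hlen, ih.2.2.2.1, ih.2.2.2.2.1, ih.2.2.2.2.2⟩
  | bump h hlen hh hnb ih => exact ⟨ih.1, by omega, hlen, ih.2.2.2.1, by omega, ih.2.2.2.2.2⟩

lemma trav_sound {n : ℕ} (hc : IsComposition c n) {p t j r : ℕ} (h : Trav c p t j r) :
    TinfCol c j r = some (Tentry c t p) := by
  induction h with
  | base h1 h2 h3 h4 =>
    obtain _|(_|m) := p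
    · omega
    · rw [TinfCol, Tcol_eq_some c 1 ⟨h3, h4⟩]
    · rw [tinf_rec c m]
      unfold tgt
      rw [if_pos ⟨h3, h4⟩]
  | @same j r h hlen hh hnb ih =>
    have hf := trav_facts h
    obtain ⟨m, rfl⟩ : ∃ m, j = m + 1 := ⟨j - 1, by omega⟩
    have hee : hgt c (m+1+1) = hgt c (m+2) := rfl
    rw [tinf_rec c m]
    unfold tgt
    rw [if_neg (by omega)]
    have hbneg : ¬(r = hgt c (m+1+1) + 1 ∧ HasLeftNb c (m+1+1) ∧
        TinfCol c (m+1) (hgt c (m+1+1)) ≠ none) := by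
      rintro ⟨he, hlnb, -⟩
      exact hnb ⟨by omega, hlnb⟩
    rw [if_neg hbneg]
    exact ih
  | @bump j r h hlen hh hlnb ih =>
    have hf := trav_facts h
    obtain ⟨m, rfl⟩ : ∃ m, j = m + 1 := ⟨j - 1, by omega⟩
    have hee : hgt c (m+1+1) = hgt c (m+2) := rfl
    rw [tinf_rec c m]
    unfold tgt
    have hh1 : 1 ≤ hgt c (m+1+1) := hgt_pos c hc (by omega) hlen
    rw [if_neg (by omega)]
    rw [if_pos ⟨by omega, hlnb, by rw [hh]; rw [ih]; simp⟩, hh]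
    exact ih

lemma trav_complete {n : ℕ} (hc : IsComposition c n) : ∀ j, 1 ≤ j → j ≤ c.length →
    ∀ i e, TinfCol c j i = some e → ∃ p t, Trav c p t j i ∧ e = Tentry c t p := by
  intro j
  induction j using Nat.strong_induction_on with
  | _ j ih =>
    match j with
    | 0 => omega
    | 1 =>
      intro _ hlen i e h
      rw [TinfCol] at h
      unfold Tcol at h
      by_cases h1 : 1 ≤ i ∧ i ≤ hgt c 1
      · rw [if_pos h1] at h
        exact ⟨1, i, Trav.base le_rfl hlen h1.1 h1.2, by simpa using h.symm⟩
      · rw [if_neg h1] at h; cases h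
    | (m+2) =>
      intro _ hlen i e h
      rw [tinf_rec c m] at h
      unfold tgt at h
      by_cases h1 : 1 ≤ i ∧ i ≤ hgt c (m+2)
      · rw [if_pos h1] at h
        exact ⟨m+2, i, Trav.base (by omega) hlen h1.1 h1.2, by simpa using h.symm⟩
      · rw [if_neg h1] at h
        by_cases h2 : i = hgt c (m+2) + 1 ∧ HasLeftNb c (m+2) ∧
            TinfCol c (m+1) (hgt c (m+2)) ≠ none
        · rw [if_pos h2] at h
          obtain ⟨p, t, htr, he⟩ := ih (m+1) (by omega) (by omega) (by omega) _ _ h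
          exact ⟨p, t, by
            have := Trav.bump htr (by omega) rfl h2.2.1
            rwa [← h2.1] at this, he⟩
        · rw [if_neg h2] at h
          have hee : hgt c (m+1+1) = hgt c (m+2) := rfl
          obtain ⟨p, t, htr, he⟩ := ih (m+1) (by omega) (by omega) (by omega) _ _ h
          refine ⟨p, t, Trav.same htr (by omega) ?_ ?_, he⟩
          · have : 1 ≤ i := (tinf_bound c (m+1) i (by rw [h]; simp)).1
            omega
          · rintro ⟨hh, hlnb⟩
            have h1i : 1 ≤ i := (tinf_bound c (m+1) i (by rw [h]; simp)).1
            have hgt1 : 1 ≤ hgt c (m+2) := hgt_pos c hc (by omega) hlen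
            have : i = hgt c (m+2) + 1 := by omega
            exact h2 ⟨this, hlnb, by
              have := tinf_lnb_prev c hc (show 2 ≤ m+2 by omega) hlen hlnb
              simpa using this⟩

lemma trav_at_base {p t j b : ℕ} (h : Trav c p t j b) : j = p → b = t := by
  induction h with
  | base _ _ _ _ => intro _; rfl
  | @same j r h _ _ _ _ => intro hj; have := trav_facts h; omega
  | @bump j r h _ _ _ _ => intro hj; have := trav_facts h; omega

lemma trav_row_unique {p t j a : ℕ} (h1 : Trav c p t j a) :
    ∀ b, Trav c p t j b → a = b := by
  induction h1 with
  | base hp1 hp2 ht1 ht2 =>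
    intro b h2
    exact (trav_at_base h2 rfl).symm
  | @same j r h hlen hh hnb ih =>
    intro b h2
    cases h2 with
    | base _ _ _ _ => have := trav_facts h; omega
    | same h' hlen' hh' hnb' => rw [ih _ h']
    | bump h' hlen' hh' hnb' =>
      have := ih _ h'
      omega
  | @bump j r h hlen hh hlnb ih =>
    intro b h2
    cases h2 with
    | base _ _ _ _ => have := trav_facts h; omega
    | same h' hlen' hh' hnb' =>
      have := ih _ h'
      omega
    | bump h' hlen' hh' hlnb' => rw [ih _ h']

lemma trav_prefix_le {p t j r : ℕ} (h : Trav c p t j r) :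
    ∀ m i, Trav c p t m i → m ≤ j → i ≤ r := by
  induction h with
  | base hp1 hp2 ht1 ht2 =>
    intro m i h2 hm
    have hf := trav_facts h2
    exact le_of_eq (trav_at_base h2 (by omega))
  | @same j r h hlen hh hnb ih =>
    intro m i h2 hm
    rcases Nat.lt_or_ge m (j+1) with h' | h'
    · exact ih m i h2 (by omega)
    · have hm' : m = j + 1 := by omega
      subst hm'
      exact le_of_eq (trav_row_unique h2 _ (Trav.same h hlen hh hnb))
  | @bump j r h hlen hh hlnb ih =>
    intro m i h2 hm
    rcases Nat.lt_or_ge m (j+1) with h' | h'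
    · have := ih m i h2 (by omega); omega
    · have hm' : m = j + 1 := by omega
      subst hm'
      exact le_of_eq (trav_row_unique h2 _ (Trav.bump h hlen hh hlnb))

end TravBasic
section TravChain

variable {c : List ℕ}

lemma trav_chain {p t j r : ℕ} (h : Trav c p t j r) :
    (r = t ∧ ∀ x, p < x → x ≤ j → hgt c x ≤ t - 1 ∧ (hgt c x = t - 1 → ¬HasLeftNb c x))
    ∨ (t < r ∧ ∃ q : ℕ → ℕ,
        (∀ s, t ≤ s → s < r → p < q s ∧ q s ≤ j ∧ hgt c (q s) = s ∧ HasLeftNb c (q s)) ∧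
        (∀ s, t ≤ s → s + 1 < r → q s < q (s+1)) ∧
        (∀ x, p < x → x < q t → hgt c x ≤ t - 1 ∧ (hgt c x = t - 1 → ¬HasLeftNb c x)) ∧
        (∀ s x, t ≤ s → s + 1 < r → q s < x → x < q (s+1) → hgt c x < s) ∧
        (∀ x, q (r-1) < x → x ≤ j → hgt c x < r - 1)) := by
  induction h with
  | base h1 h2 h3 h4 =>
    left
    exact ⟨rfl, fun x hx1 hx2 => absurd (lt_of_lt_of_le hx1 hx2) (lt_irrefl _)⟩
  | @same j r h hlen hh hnb ih =>
    have hf := trav_facts h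
    rcases ih with ⟨hrt, hpass⟩ | ⟨hlt, q, hq1, hq2, hq3, hq4, hq5⟩
    · subst hrt
      left
      refine ⟨rfl, fun x hx1 hx2 => ?_⟩
      rcases Nat.lt_or_ge x (j+1) with hx | hx
      · exact hpass x hx1 (by omega)
      · have hxe : x = j + 1 := by omega
        subst hxe
        exact ⟨by omega, fun he => fun hl => hnb ⟨he, hl⟩⟩
    · right
      refine ⟨hlt, q, fun s hs1 hs2 => ?_, hq2, hq3, hq4, fun x hx1 hx2 => ?_⟩
      · obtain ⟨a1, a2, a3, a4⟩ := hq1 s hs1 hs2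
        exact ⟨a1, by omega, a3, a4⟩
      · rcases Nat.lt_or_ge x (j+1) with hx | hx
        · exact hq5 x hx1 (by omega)
        · have hxe : x = j + 1 := by omega
          subst hxe
          -- hgt c (j+1) < r; if = r - 1 then it has a left neighbour, contradiction
          rcases Nat.lt_or_ge (hgt c (j+1)) (r-1) with hlt' | hge
          · exact hlt'
          · exfalso
            have heq : hgt c (j+1) = r - 1 := by omega
            obtain ⟨b1, b2, b3, b4⟩ := hq1 (r-1) (by omega) (by omega)
            exact hnb ⟨heq, hasLeftNb_of_exists c ⟨q (r-1), by omega, by omega,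
              by rw [b3, heq]⟩⟩
  | @bump j r h hlen hh hlnb ih =>
    have hf := trav_facts h
    right
    rcases ih with ⟨hrt, hpass⟩ | ⟨hlt, q, hq1, hq2, hq3, hq4, hq5⟩
    · subst hrt
      refine ⟨by omega, fun _ => j+1, ?_, ?_, ?_, ?_, ?_⟩
      · intro s hs1 hs2
        have hse : s = r := by omega
        subst hse
        dsimp only
        exact ⟨by omega, le_rfl, hh, hlnb⟩
      · intro s hs1 hs2
        omega
      · intro x hx1 hx2
        dsimp only at hx2
        exact hpass x hx1 (by omega)
      · intro s x hs1 hs2 _ _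
        omega
      · intro x hx1 hx2
        dsimp only at hx1
        omega
    · refine ⟨by omega, fun s => if s = r then j+1 else q s, ?_, ?_, ?_, ?_, ?_⟩
      · intro s hs1 hs2
        dsimp only
        by_cases hse : s = r
        · subst hse
          rw [if_pos rfl]
          exact ⟨by omega, le_rfl, hh, hlnb⟩
        · rw [if_neg hse]
          obtain ⟨a1, a2, a3, a4⟩ := hq1 s hs1 (by omega)
          exact ⟨a1, by omega, a3, a4⟩
      · intro s hs1 hs2
        dsimp only
        have hsne : s ≠ r := by omega
        rw [if_neg hsne]
        by_cases hse : s + 1 = r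
        · rw [if_pos hse]
          obtain ⟨a1, a2, a3, a4⟩ := hq1 s hs1 (by omega)
          omega
        · rw [if_neg hse]
          exact hq2 s hs1 (by omega)
      · intro x hx1 hx2
        dsimp only at hx2
        rw [if_neg (by omega : t ≠ r)] at hx2
        exact hq3 x hx1 hx2
      · intro s x hs1 hs2 hx1 hx2
        dsimp only at hx1 hx2
        have hsne : s ≠ r := by omega
        rw [if_neg hsne] at hx1
        by_cases hse : s + 1 = r
        · rw [if_pos hse] at hx2
          have := hq5 x (by rw [show r - 1 = s from by omega]; exact hx1) (by omega)
          omega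
        · rw [if_neg hse] at hx2
          exact hq4 s x hs1 (by omega) hx1 hx2
      · intro x hx1 hx2
        dsimp only at hx1
        rw [show r + 1 - 1 = r from rfl, if_pos rfl] at hx1
        omega

end TravChain
section Final

variable {c : List ℕ}

lemma lineB_one_iff (a i j : ℕ) : LineB c a i j Lab.one ↔
    (2 ≤ j ∧ j ≤ c.length ∧ 1 ≤ i ∧
      ((maxHgt c j < hgt c j ∧ i ≤ maxHgt c j + 1 ∧ TinfCol c (j - 1) i = some a)
       ∨ (hgt c j ≤ maxHgt c j ∧ i + 1 ≤ hgt c j ∧ TinfCol c (j - 1) i = some a)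
       ∨ (hgt c j ≤ maxHgt c j ∧ i = hgt c j ∧
           ¬(∃ j', 1 ≤ j' ∧ j' < j ∧ hgt c j' = hgt c j) ∧
           TinfCol c (j - 1) i = some a)
       ∨ (hgt c j ≤ maxHgt c j ∧ i = hgt c j ∧
           (∃ j', 1 ≤ j' ∧ j' < j ∧ hgt c j' = hgt c j) ∧
           TinfCol c (j - 1) (i + 1) = some a))) := Iff.rfl

/-- where the entry of box `(t0, p)` can occur in `T(∞)`. -/
lemma occurrence {n : ℕ} (hc : IsComposition c n) {p t0 jmax tf : ℕ}
    (htr : Trav c p t0 jmax tf) (hrow : tf = t0) {m i : ℕ} (hm1 : 1 ≤ m) (hm2 : m ≤ jmax)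
    (hocc : TinfCol c m i = some (Tentry c t0 p)) : p ≤ m ∧ i = t0 := by
  have hf := trav_facts htr
  have hmlen : m ≤ c.length := le_trans hm2 hf.2.2.1
  obtain ⟨p1, t1, htr1, he1⟩ := trav_complete hc m hm1 hmlen i _ hocc
  have hf1 := trav_facts htr1
  obtain ⟨het, hep⟩ := Tentry_inj c hf1.2.2.2.1 hf1.2.2.2.2.2 hf1.1
    hf.2.2.2.1 hf.2.2.2.2.2 hf.1 he1.symm
  subst het; subst hep
  refine ⟨hf1.2.1, ?_⟩
  have h1 := trav_prefix_le htr m i htr1 hm2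
  have h2 := hf1.2.2.2.2.1
  omega

theorem statement19_aux (n : ℕ) (hn : 0 < n) (c : List ℕ) (hc : IsComposition c n)
    (hk : 1 ≤ c.length) :
    (∀ t, 1 ≤ t → t ≤ maxH c → TinfCol c c.length t ≠ none) ∧
    (∀ t, maxH c + 1 < t → TinfCol c c.length t = none) ∧
    (∀ t r, 1 ≤ t → TinfCol c c.length t = some r →
      ((∃ u cc col, RExtStair c u cc col ∧
          r = Tentry c u (stairBoxCol c u (col u))) ∨
        (t ≤ maxH c ∧ ∃ j, 1 ≤ j ∧ j ≤ c.length ∧ t ≤ hgt c j ∧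
          (∀ j', j < j' → j' ≤ c.length → hgt c j' < t) ∧
          r = Tentry c t j ∧ RExt c t j))) := by
  refine ⟨?_, ?_, ?_⟩
  · intro t h1 h2
    exact tinf_nonempty c hc c.length hk le_rfl t h1 (by rw [← maxH_eq c] at *; omega)
  · intro t ht
    by_contra h
    have := tinf_tight_bound c c.length hk le_rfl t h
    rw [← maxH_eq c] at this
    omega
  · intro t r h1t hocc
    obtain ⟨p, t0, htr, hre⟩ := trav_complete hc c.length hk le_rfl t r hocc
    have hf := trav_facts htr
    rcases trav_chain htr with ⟨hrt, hpass⟩ | ⟨hlt, q, hq1, hq2, hq3, hq4, hq5⟩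
    · -- entry never bumped : second alternative
      right
      subst hrt
      constructor
      · calc t ≤ hgt c p := hf.2.2.2.2.2
          _ ≤ maxHgt c (c.length + 1) := hgt_le_maxHgt c hf.1 (by omega)
          _ = maxH c := (maxH_eq c).symm
      refine ⟨p, hf.1, hf.2.1, hf.2.2.2.2.2, ?_, hre, ?_, ?_⟩
      · intro j' hj1 hj2
        have := hpass j' hj1 hj2
        omega
      · exact ⟨hf.1, hf.2.1, hf.2.2.2.1, hf.2.2.2.2.2⟩
      · -- right extremality
        intro i' j' hline
        rw [hre] at hocc
        rw [lineB_one_iff] at hline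
        obtain ⟨hj2, hjlen, hi1, hbig⟩ := hline
        have hub : ∀ i'', TinfCol c (j'-1) i'' = some (Tentry c t p) → p ≤ j' - 1 ∧ i'' = t :=
          fun i'' h => occurrence hc htr rfl (by omega) (by omega) h
        have hplt : ∀ i'', TinfCol c (j'-1) i'' = some (Tentry c t p) →
            hgt c j' ≤ t - 1 ∧ (hgt c j' = t - 1 → ¬HasLeftNb c j') := by
          intro i'' h
          have := (hub i'' h).1
          exact hpass j' (by omega) hjlen
        have hmaxge : t ≤ maxHgt c j' → True := fun _ => trivial
        rcases hbig with ⟨hd1, hd2, hd3⟩ | ⟨hd1, hd2, hd3⟩ | ⟨hd1, hd2, hd3, hd4⟩ |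
          ⟨hd1, hd2, hd3, hd4⟩
        · -- taller column to the right: impossible
          have h5 := hub i' hd3
          have h6 := hplt i' hd3
          have h7 : hgt c p ≤ maxHgt c j' := hgt_le_maxHgt c hf.1 (by omega)
          have h8 := hf.2.2.2.2.2
          omega
        · have h5 := hub i' hd3
          have h6 := hplt i' hd3
          omega
        · have h5 := hub i' hd4
          have h6 := hplt i' hd4
          omega
        · have h5 := hub (i'+1) hd4
          have h6 := hplt (i'+1) hd4
          have hlnb : HasLeftNb c j' := hasLeftNb_of_exists c hd3
          have h7 : hgt c j' = t - 1 := by omega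
          exact h6.2 h7 hlnb
    · -- bumped at least once : staircase alternative
      left
      refine ⟨t0, t - 1, q, ⟨⟨⟨by omega, by omega, ?_, ?_⟩, ?_⟩, ?_⟩, ?_⟩
      · intro s hs1 hs2
        obtain ⟨a1, a2, a3, a4⟩ := hq1 s hs1 (by omega)
        exact ⟨by omega, le_trans a2 hf.2.2.1, a3, a4⟩
      · intro s hs1 hs2
        refine ⟨hq2 s hs1 (by omega), ?_⟩
        intro j'' hx1 hx2
        exact hq4 s j'' hs1 (by omega) hx1 hx2
      · -- maximality
        rintro ⟨u', cc', col', hst', hu', hcc', hstrict, hagree⟩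
        obtain ⟨hu1', hucc', hcols', hbet'⟩ := hst'
        rcases hstrict with hlt' | hlt'
        · -- extension below
          have ht02 : 2 ≤ t0 := by omega
          obtain ⟨y1, y2, y3, y4⟩ := hcols' (t0 - 1) (by omega) (by omega)
          obtain ⟨hyo, hybet⟩ := hbet' (t0 - 1) (by omega) (by omega)
          rw [show t0 - 1 + 1 = t0 from by omega] at hyo hybet
          rw [hagree t0 le_rfl (by omega)] at hyo hybet
          have hpq : p < q t0 := (hq1 t0 le_rfl (by omega)).1
          have hgp : t0 ≤ hgt c p := hf.2.2.2.2.2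
          rcases lt_trichotomy (col' (t0-1)) p with hy | hy | hy
          · have := hybet p hy hpq
            omega
          · rw [hy] at y3; omega
          · have := hq3 (col' (t0-1)) hy hyo
            exact this.2 (by omega) y4
        · -- extension above
          obtain ⟨y1, y2, y3, y4⟩ := hcols' t (by omega) (by omega)
          obtain ⟨hyo, -⟩ := hbet' (t - 1) (by omega) (by omega)
          rw [show t - 1 + 1 = t from by omega] at hyo
          rw [hagree (t-1) (by omega) le_rfl] at hyo
          have := hq5 (col' t) hyo y2
          omega
      · -- right extremal staircase
        intro j' hj1 hj2
        exact hq5 j' hj1 hj2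
      · -- the entry is the entry of b(S)
        have hsb : stairBoxCol c t0 (q t0) = p := by
          have hpq : p < q t0 := (hq1 t0 le_rfl (by omega)).1
          have hgp : t0 ≤ hgt c p := hf.2.2.2.2.2
          have hmem : p ∈ {x | x < q t0 ∧ t0 ≤ hgt c x} := ⟨hpq, hgp⟩
          have hub : ∀ x ∈ {x | x < q t0 ∧ t0 ≤ hgt c x}, x ≤ p := by
            rintro x ⟨hx1, hx2⟩
            by_contra hxp
            push_neg at hxp
            have := hq3 x hxp hx1
            omega
          unfold stairBoxCol
          exact le_antisymm (csSup_le ⟨p, hmem⟩ hub) (le_csSup ⟨p, hub⟩ hmem)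
        rw [hsb]
        exact hre

end Final

/-- every box `R_t ∩ C_k` of `T(∞)` with `t ≤ |D|` is nonempty, every
box `R_t ∩ C_k` with `t > |D| + 1` is empty, and the entry `r` of any nonempty box
`R_t ∩ C_k` of `T(∞)` is either the entry of `b(S)` for some right extremal column
staircase `S` in `D`, or the entry of the box `R_t ∩ C^t`, where `C^t` is the
rightmost column of `D` of height `≥ t` and this box is right extremal in `D`
relative to `ℓ(D)`; when `t = |D| + 1` only the first alternative can occur. -/
theorem statement19 (n : ℕ) (hn : 0 < n) (c : List ℕ) (hc : IsComposition c n)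
    (hk : 1 ≤ c.length) :
    (∀ t, 1 ≤ t → t ≤ maxH c → TinfCol c c.length t ≠ none) ∧
    (∀ t, maxH c + 1 < t → TinfCol c c.length t = none) ∧
    (∀ t r, 1 ≤ t → TinfCol c c.length t = some r →
      ((∃ u cc col, RExtStair c u cc col ∧
          r = Tentry c u (stairBoxCol c u (col u))) ∨
        (t ≤ maxH c ∧ ∃ j, 1 ≤ j ∧ j ≤ c.length ∧ t ≤ hgt c j ∧
          (∀ j', j < j' → j' ≤ c.length → hgt c j' < t) ∧
          r = Tentry c t j ∧ RExt c t j))) := by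
  exact statement19_aux n hn c hc hk
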